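/- Let F be an n × m Ferrers diagram with column heights c_1 ≤ ... ≤ c_m and let 1 ≤ d ≤ min{n,m}. Then κ(F,d) ≥ Σ_{i=1}^{m+n-1} max{0, |D_i ∩ F| - d + 1}. -/

import Mathlib

/-- The `n × m` matrix board `[n] × [m]` (1-based). -/
def board (n m : ℕ) : Finset (ℕ × ℕ) := Finset.Icc 1 n ×ˢ Finset.Icc 1 m

/-- `F` is an `n × m` Ferrers diagram: contained in the board, contains `(1,1)` and `(n,m)`,
right-aligned and top-aligned. -/
def IsFerrers (n m : ℕ) (F : Finset (ℕ × ℕ)) : Prop :=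
  F ⊆ board n m ∧ (1, 1) ∈ F ∧ (n, m) ∈ F ∧
  (∀ i j, (i, j) ∈ F → j < m → (i, j + 1) ∈ F) ∧
  (∀ i j, (i, j) ∈ F → 1 < i → (i - 1, j) ∈ F)

/-- The `r`-th diagonal of the `n × m` board: `{(i,j) : j - i = m - r}`. -/
def diag (n m r : ℕ) : Finset (ℕ × ℕ) :=
  (board n m).filter (fun p => p.2 + r = p.1 + m)

/-- The height `c_t` of the `t`-th column of `F`. -/
def colH (F : Finset (ℕ × ℕ)) (t : ℕ) : ℕ := (F.filter (fun p => p.2 = t)).card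

/-- `κ_j(F,d) = Σ_{t=1}^{m-d+1+j} max{c_t - j, 0}` (truncated subtraction). -/
def kappaJ (F : Finset (ℕ × ℕ)) (m d j : ℕ) : ℕ :=
  ∑ t ∈ Finset.Icc 1 (m - d + 1 + j), (colH F t - j)

/-- `κ(F,d) = min_{0 ≤ j ≤ d-1} κ_j(F,d)`. -/
noncomputable def kappa (F : Finset (ℕ × ℕ)) (m d : ℕ) : ℕ :=
  sInf (kappaJ F m d '' Set.Iio d)

/-- `Σ_{i=1}^{m+n-1} max{0, |D_i ∩ F| - (d-1)}` (truncated subtraction). -/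
def diagSum (n m : ℕ) (F : Finset (ℕ × ℕ)) (d : ℕ) : ℕ :=
  ∑ i ∈ Finset.Icc 1 (m + n - 1), ((diag n m i ∩ F).card - (d - 1))

/-- The pair `(F,d)` is MDS-constructible. -/
def MDSConstructible (n m : ℕ) (F : Finset (ℕ × ℕ)) (d : ℕ) : Prop :=
  kappa F m d = diagSum n m F d

/-- A downward-closed finset of positive naturals is an initial segment. -/
lemma initSeg (A : Finset ℕ) (h1 : ∀ i ∈ A, 1 ≤ i)
    (h2 : ∀ i ∈ A, 1 < i → i - 1 ∈ A) : A = Finset.Icc 1 A.card := by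
  rcases A.eq_empty_or_nonempty with h | h
  · simp [h]
  · have hdown : ∀ i, i ∈ A → ∀ l, 1 ≤ l → l ≤ i → l ∈ A := by
      intro i
      induction i with
      | zero => intro hi l hl1 hl2; omega
      | succ k ih =>
        intro hi l hl1 hl2
        rcases eq_or_lt_of_le hl2 with rfl | hlt
        · exact hi
        · have hk : k + 1 - 1 ∈ A := h2 _ hi (by omega)
          exact ih (by simpa using hk) l hl1 (by omega)
    set M := A.max' h with hM
    have hsub1 : Finset.Icc 1 M ⊆ A := by
      intro l hl
      rw [Finset.mem_Icc] at hl
      exact hdown M (A.max'_mem h) l hl.1 hl.2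
    have hsub2 : A ⊆ Finset.Icc 1 M := fun i hi =>
      Finset.mem_Icc.mpr ⟨h1 i hi, A.le_max' i hi⟩
    have hAeq : A = Finset.Icc 1 M := subset_antisymm hsub2 hsub1
    have hMA : 1 ≤ M := h1 M (A.max'_mem h)
    have hcard : A.card = M := by rw [hAeq, Nat.card_Icc]; omega
    rw [hcard]; exact hAeq

lemma mem_board {n m : ℕ} {p : ℕ × ℕ} (hp : p ∈ board n m) :
    1 ≤ p.1 ∧ p.1 ≤ n ∧ 1 ≤ p.2 ∧ p.2 ≤ m := by
  simp only [board, Finset.mem_product, Finset.mem_Icc] at hp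
  tauto

/-- Count of points in column `t` with row `> j`. -/
lemma col_count (n m : ℕ) (F : Finset (ℕ × ℕ)) (hF : IsFerrers n m F) (t j : ℕ) :
    (F.filter (fun p => p.2 = t ∧ j < p.1)).card = colH F t - j := by
  obtain ⟨hb, -, -, -, htop⟩ := hF
  set C := F.filter (fun p => p.2 = t) with hC
  have hinj : Set.InjOn Prod.fst (C : Set (ℕ × ℕ)) := by
    intro p hp q hq hpq
    simp only [hC, Finset.coe_filter, Set.mem_setOf_eq] at hp hq
    exact Prod.ext hpq (hp.2.trans hq.2.symm)
  set A := C.image Prod.fst with hA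
  have hcardA : A.card = colH F t := by
    rw [hA, Finset.card_image_of_injOn hinj]; rfl
  have hAeq : A = Finset.Icc 1 (colH F t) := by
    rw [← hcardA]
    apply initSeg
    · intro i hi
      obtain ⟨p, hp, rfl⟩ := Finset.mem_image.1 hi
      exact (mem_board (hb (Finset.mem_filter.1 hp).1)).1
    · intro i hi h1i
      obtain ⟨p, hp, rfl⟩ := Finset.mem_image.1 hi
      have hp' := Finset.mem_filter.1 hp
      have hF1 : (p.1 - 1, p.2) ∈ F := htop p.1 p.2 (by simpa using hp'.1) h1i
      exact Finset.mem_image.2 ⟨(p.1 - 1, p.2), Finset.mem_filter.2 ⟨hF1, hp'.2⟩, rfl⟩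
  have hfilt : F.filter (fun p => p.2 = t ∧ j < p.1) = C.filter (fun p => j < p.1) := by
    rw [hC, Finset.filter_filter]
  rw [hfilt]
  have hinj2 : Set.InjOn Prod.fst ((C.filter fun p => j < p.1) : Set (ℕ × ℕ)) := by
    intro p hp q hq hpq
    exact hinj (by simpa using (Finset.mem_coe.1 hp |> Finset.mem_of_mem_filter _))
      (by simpa using (Finset.mem_coe.1 hq |> Finset.mem_of_mem_filter _)) hpq
  have himg : (C.filter fun p => j < p.1).image Prod.fst = A.filter (fun x => j < x) := by
    ext x
    simp only [hA, Finset.mem_image, Finset.mem_filter]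
    constructor
    · rintro ⟨p, hp, rfl⟩
      exact ⟨⟨p, hp.1, rfl⟩, hp.2⟩
    · rintro ⟨⟨p, hp, rfl⟩, hx⟩
      exact ⟨p, ⟨hp, hx⟩, rfl⟩
  have : (C.filter fun p => j < p.1).card = (A.filter (fun x => j < x)).card := by
    rw [← himg, Finset.card_image_of_injOn hinj2]
  rw [this, hAeq]
  have : (Finset.Icc 1 (colH F t)).filter (fun x => j < x) = Finset.Icc (j+1) (colH F t) := by
    ext x; simp only [Finset.mem_filter, Finset.mem_Icc]; omega
  rw [this, Nat.card_Icc]; omega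

theorem kappa_ge_diagSum (n m d : ℕ) (F : Finset (ℕ × ℕ)) (hF : IsFerrers n m F)
    (hd1 : 1 ≤ d) (hd2 : d ≤ min n m) :
    diagSum n m F d ≤ kappa F m d := by
  -- reduce to: for every j < d, diagSum ≤ kappaJ F m d j
  suffices h : ∀ j < d, diagSum n m F d ≤ kappaJ F m d j by
    have hne : (kappaJ F m d '' Set.Iio d).Nonempty :=
      ⟨kappaJ F m d 0, 0, by simp only [Set.mem_Iio]; omega, rfl⟩
    obtain ⟨j, hj, hjeq⟩ := Nat.sInf_mem hne
    rw [kappa, ← hjeq]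
    exact h j hj
  intro j hj
  have hb := hF.1
  have hdm : d ≤ m := le_trans hd2 (min_le_right _ _)
  have hdn : d ≤ n := le_trans hd2 (min_le_left _ _)
  set N := m - d + 1 + j with hN
  set S := F.filter (fun p => p.2 ≤ N ∧ j < p.1) with hS
  -- Step 1: kappaJ = S.card
  have hkap : kappaJ F m d j = S.card := by
    have hfib : ∀ p ∈ S, p.2 ∈ Finset.Icc 1 N := by
      intro p hp
      have hp' := Finset.mem_filter.1 hp
      exact Finset.mem_Icc.2 ⟨(mem_board (hb hp'.1)).2.2.1, hp'.2.1⟩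
    rw [hS, kappaJ]
    rw [Finset.card_eq_sum_card_fiberwise hfib]
    apply Finset.sum_congr rfl
    intro t ht
    rw [Finset.mem_Icc] at ht
    rw [← col_count n m F hF t j]
    congr 1
    rw [Finset.filter_filter]
    apply Finset.filter_congr
    intro p hp
    have htN := ht.2
    omega
  rw [hkap, diagSum]
  -- Step 2: decompose S.card by diagonals
  have hfib2 : ∀ p ∈ S, p.1 + m - p.2 ∈ Finset.Icc 1 (m + n - 1) := by
    intro p hp
    have hp' := mem_board (hb (Finset.mem_filter.1 hp).1)
    rw [Finset.mem_Icc]; omega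
  rw [Finset.card_eq_sum_card_fiberwise hfib2]
  apply Finset.sum_le_sum
  intro i hi
  rw [Finset.mem_Icc] at hi
  -- the fiber equals (diag ∩ F) filtered by S-condition
  set Di := diag n m i ∩ F with hDi
  have hfeq : S.filter (fun p => p.1 + m - p.2 = i)
      = Di.filter (fun p => p.2 ≤ N ∧ j < p.1) := by
    ext p
    simp only [hS, hDi, diag, Finset.mem_filter, Finset.mem_inter]
    constructor
    · rintro ⟨⟨hpF, hc⟩, heq⟩
      obtain ⟨a1, a2, a3, a4⟩ := mem_board (hb hpF)
      exact ⟨⟨⟨hb hpF, by omega⟩, hpF⟩, hc⟩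
    · rintro ⟨⟨⟨hpb, heq⟩, hpF⟩, hc⟩
      obtain ⟨a1, a2, a3, a4⟩ := mem_board hpb
      exact ⟨⟨hpF, hc⟩, by omega⟩
  rw [hfeq]
  -- Step 3: per-diagonal bound
  have hsplit := Finset.card_filter_add_card_filter_not
    (s := Di) (p := fun p => p.2 ≤ N ∧ j < p.1)
  have hbad : (Di.filter (fun p => ¬(p.2 ≤ N ∧ j < p.1))).card ≤ d - 1 := by
    have hsub : Di.filter (fun p => ¬(p.2 ≤ N ∧ j < p.1))
        ⊆ Di.filter (fun p => p.1 ≤ j) ∪ Di.filter (fun p => N < p.2) := by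
      intro p hp
      rw [Finset.mem_filter] at hp
      rw [Finset.mem_union, Finset.mem_filter, Finset.mem_filter]
      rcases hp with ⟨hpD, hnot⟩
      push_neg at hnot
      by_cases hc : p.2 ≤ N
      · exact Or.inl ⟨hpD, by have := hnot hc; omega⟩
      · exact Or.inr ⟨hpD, by omega⟩
    have hinjD : ∀ (p : ℕ × ℕ), p ∈ Di → ∀ q ∈ Di, p.1 = q.1 → p = q := by
      intro p hp q hq h
      rw [hDi, Finset.mem_inter, diag, Finset.mem_filter] at hp hq
      exact Prod.ext h (by omega)
    have h1 : (Di.filter (fun p => p.1 ≤ j)).card ≤ j := by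
      have := Finset.card_le_card_of_injOn (f := Prod.fst)
        (s := Di.filter (fun p => p.1 ≤ j)) (t := Finset.Icc 1 j)
        (by
          intro p hp
          rw [Finset.mem_coe, Finset.mem_filter] at hp
          have hpb := mem_board (hb (Finset.mem_inter.1 hp.1).2)
          exact Finset.mem_Icc.2 ⟨hpb.1, hp.2⟩)
        (by
          intro p hp q hq h
          simp only [Finset.coe_filter, Set.mem_setOf_eq] at hp hq
          exact hinjD p hp.1 q hq.1 h)
      simpa using this
    have h2 : (Di.filter (fun p => N < p.2)).card ≤ d - 1 - j := by
      have := Finset.card_le_card_of_injOn (f := Prod.snd)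
        (s := Di.filter (fun p => N < p.2)) (t := Finset.Icc (N+1) m)
        (by
          intro p hp
          rw [Finset.mem_coe, Finset.mem_filter] at hp
          have hpb := mem_board (hb (Finset.mem_inter.1 hp.1).2)
          exact Finset.mem_Icc.2 ⟨by omega, hpb.2.2.2⟩)
        (by
          intro p hp q hq h
          simp only [Finset.coe_filter, Set.mem_setOf_eq] at hp hq
          have e1 := hp.1; have e2 := hq.1
          rw [hDi, Finset.mem_inter, diag, Finset.mem_filter] at e1 e2
          exact Prod.ext (by omega) h)
      rw [Nat.card_Icc] at this
      omega
    calc (Di.filter (fun p => ¬(p.2 ≤ N ∧ j < p.1))).card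
        ≤ (Di.filter (fun p => p.1 ≤ j) ∪ Di.filter (fun p => N < p.2)).card :=
          Finset.card_le_card hsub
      _ ≤ (Di.filter (fun p => p.1 ≤ j)).card + (Di.filter (fun p => N < p.2)).card :=
          Finset.card_union_le _ _
      _ ≤ d - 1 := by omega
  omega
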